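/- The Diophantine equation y^2 - x*y*z + z^2 = x^3 - 5 has no solution in integers x, y, z. -/

import Mathlib

lemma fruit_prime_factor (n : ℕ) (hn : n % 12 = 5 ∨ n % 12 = 7) :
    ∃ p : ℕ, p.Prime ∧ p ∣ n ∧ (p % 12 = 5 ∨ p % 12 = 7) := by
  induction n using Nat.strong_induction_on with
  | _ n ih =>
    have hn1 : n ≠ 1 := by omega
    have hp : n.minFac.Prime := Nat.minFac_prime hn1
    have hpd : n.minFac ∣ n := Nat.minFac_dvd n
    by_cases h : n.minFac % 12 = 5 ∨ n.minFac % 12 = 7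
    · exact ⟨n.minFac, hp, hpd, h⟩
    · have h2n : ¬ 2 ∣ n := by omega
      have h3n : ¬ 3 ∣ n := by omega
      have h2p : ¬ 2 ∣ n.minFac := fun hd => h2n (hd.trans hpd)
      have h3p : ¬ 3 ∣ n.minFac := fun hd => h3n (hd.trans hpd)
      have hp12 : n.minFac % 12 = 1 ∨ n.minFac % 12 = 11 := by omega
      obtain ⟨m, hm⟩ := hpd
      have hmod := Nat.mul_mod n.minFac m 12
      rw [← hm] at hmod
      have hm12 : m % 12 = 5 ∨ m % 12 = 7 := by
        rcases hp12 with h1 | h1 <;> rw [h1] at hmod <;> omega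
      have hlt : m < n := by
        have h2 : 2 * m ≤ n.minFac * m := Nat.mul_le_mul_right m hp.two_le
        have hm0 : m ≠ 0 := by rintro rfl; omega
        omega
      obtain ⟨q, hq, hqd, hq12⟩ := ih m hlt hm12
      exact ⟨q, hq, hqd.trans (hm ▸ dvd_mul_left m n.minFac), hq12⟩

lemma fruit_aux1 : ¬ IsSquare ((2 : ℤ) : ZMod 3) := by decide

lemma fruit_aux2 : ((1 : ℤ) : ZMod 3) ≠ 0 := by decide

lemma fruit_not_sq_three (p : ℕ) (hp : p.Prime) (hp12 : p % 12 = 5 ∨ p % 12 = 7)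
    (h : IsSquare (((3 : ℤ)) : ZMod p)) : False := by
  haveI := Fact.mk hp
  haveI : Fact (Nat.Prime 3) := ⟨by norm_num⟩
  have hp2 : p ≠ 2 := by omega
  have hp3 : p ≠ 3 := by omega
  have h3ne : ((3 : ℤ) : ZMod p) ≠ 0 := by
    rw [Ne, ZMod.intCast_zmod_eq_zero_iff_dvd]
    intro hd
    have : p ∣ 3 := by exact_mod_cast hd
    rcases (Nat.prime_three.eq_one_or_self_of_dvd p this) with h' | h' <;> omega
  have h1 : legendreSym p 3 = 1 := ((legendreSym.eq_one_iff p h3ne).mpr h)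
  have hqr := legendreSym.quadratic_reciprocity (p := p) (q := 3) hp2 (by norm_num) hp3
  push_cast at hqr
  rw [h1, mul_one] at hqr
  have hmod : legendreSym 3 (p : ℤ) = legendreSym 3 ((p : ℤ) % 3) := legendreSym.mod 3 p
  rcases hp12 with h5 | h7
  · have hpm3 : (p : ℤ) % 3 = 2 := by omega
    have hlv : legendreSym 3 ((2 : ℤ)) = -1 := by
      rw [legendreSym.eq_neg_one_iff 3 (a := 2)]
      exact fruit_aux1
    have heven : Even (p / 2 * (3 / 2)) := by
      refine Nat.even_iff.mpr ?_
      omega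
    rw [heven.neg_one_pow] at hqr
    rw [hmod, hpm3, hlv] at hqr
    norm_num at hqr
  · have hpm3 : (p : ℤ) % 3 = 1 := by omega
    have hlv : legendreSym 3 ((1 : ℤ)) = 1 := by
      rw [legendreSym.eq_one_iff 3 (a := 1) fruit_aux2]
      exact IsSquare.one
    have hodd : Odd (p / 2 * (3 / 2)) := by
      refine Nat.odd_iff.mpr ?_
      omega
    rw [hodd.neg_one_pow] at hqr
    rw [hmod, hpm3, hlv] at hqr
    norm_num at hqr

/-- The Diophantine equation `y² - x*y*z + z² = x³ - 5` has no solution in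
integers `x`, `y`, `z`. -/
theorem fruit_diophantine_no_solution :
    ¬ ∃ x y z : ℤ, y ^ 2 - x * y * z + z ^ 2 = x ^ 3 - 5 := by
  rintro ⟨x, y, z, hxyz⟩
  have fruit_mod4 : ∀ a b c : ZMod 4, b ^ 2 - a * b * c + c ^ 2 = a ^ 3 - 5 → a = 1 := by
    decide
  have fruit_mod9 : ∀ a b c : ZMod 9, b ^ 2 - a * b * c + c ^ 2 = a ^ 3 - 5 →
      (a = 0 ∨ a = 3 ∨ a = 6 ∨ a = 8) := by decide
  -- mod 4 : `x ≡ 1 (mod 4)`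
  have h4 : (4 : ℤ) ∣ x - 1 := by
    have hc : ((y : ZMod 4)) ^ 2 - (x : ZMod 4) * y * z + (z : ZMod 4) ^ 2
        = (x : ZMod 4) ^ 3 - 5 := by exact_mod_cast congrArg (Int.cast : ℤ → ZMod 4) hxyz
    have hx4 := fruit_mod4 x y z hc
    have : ((x - 1 : ℤ) : ZMod 4) = 0 := by push_cast; rw [hx4]; ring
    exact (ZMod.intCast_zmod_eq_zero_iff_dvd _ 4).mp this
  -- mod 9 : `x ≡ 0, 3, 6` or `8 (mod 9)`
  have h9 : (9 : ℤ) ∣ x ∨ (9 : ℤ) ∣ x - 3 ∨ (9 : ℤ) ∣ x - 6 ∨ (9 : ℤ) ∣ x - 8 := by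
    have hc : ((y : ZMod 9)) ^ 2 - (x : ZMod 9) * y * z + (z : ZMod 9) ^ 2
        = (x : ZMod 9) ^ 3 - 5 := by exact_mod_cast congrArg (Int.cast : ℤ → ZMod 9) hxyz
    rcases fruit_mod9 x y z hc with h | h | h | h
    · exact Or.inl ((ZMod.intCast_zmod_eq_zero_iff_dvd _ 9).mp (by push_cast; rw [h]))
    · exact Or.inr (Or.inl ((ZMod.intCast_zmod_eq_zero_iff_dvd _ 9).mp
        (by push_cast; rw [h]; ring)))
    · exact Or.inr (Or.inr (Or.inl ((ZMod.intCast_zmod_eq_zero_iff_dvd _ 9).mp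
        (by push_cast; rw [h]; ring))))
    · exact Or.inr (Or.inr (Or.inr ((ZMod.intCast_zmod_eq_zero_iff_dvd _ 9).mp
        (by push_cast; rw [h]; ring))))
  -- In all cases there is `m ∣ x - 2` with `m ≡ ±5 (mod 12)`
  have hkey : ∃ m : ℤ, m ∣ x - 2 ∧ ((m.natAbs) % 12 = 5 ∨ (m.natAbs) % 12 = 7) := by
    rcases h9 with h | h | h | h
    · exact ⟨x - 2, dvd_refl _, by omega⟩
    · exact ⟨x - 2, dvd_refl _, by omega⟩
    · exact ⟨x - 2, dvd_refl _, by omega⟩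
    · have h36 : (36 : ℤ) ∣ x - 17 := by omega
      obtain ⟨k, hk⟩ := h36
      exact ⟨12 * k + 5, ⟨3, by linarith⟩, by omega⟩
  obtain ⟨m, hmd, hm12⟩ := hkey
  obtain ⟨p, hp, hpd, hp12⟩ := fruit_prime_factor m.natAbs hm12
  have hpdx : (p : ℤ) ∣ x - 2 :=
    (Int.natCast_dvd_natCast.mpr hpd).trans (Int.natAbs_dvd.mpr hmd)
  haveI := Fact.mk hp
  have hx2 : ((x : ZMod p)) = 2 := by
    have h0 : ((x - 2 : ℤ) : ZMod p) = 0 := (ZMod.intCast_zmod_eq_zero_iff_dvd _ p).mpr hpdx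
    push_cast at h0
    linear_combination h0
  have hc : ((y : ZMod p)) ^ 2 - (x : ZMod p) * y * z + (z : ZMod p) ^ 2
      = (x : ZMod p) ^ 3 - 5 := by exact_mod_cast congrArg (Int.cast : ℤ → ZMod p) hxyz
  have hsq : ((y : ZMod p) - z) ^ 2 = ((3 : ℤ) : ZMod p) := by
    push_cast
    linear_combination hc + ((y : ZMod p) * z + (x : ZMod p) ^ 2 + 2 * x + 4) * hx2
  exact fruit_not_sq_three p hp hp12 ⟨(y : ZMod p) - z, by linear_combination -hsq⟩
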